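/- arXiv:2603.16396 — 3 statements merged into one kernel-verified Lean document; each statement's English description precedes it below -/
import Mathlib

section
/- For every integer n ≥ 3, the graph G_n is triangle-free, i.e., G_n contains no 3-clique. -/
open SimpleGraph

/-- The edge set of the Petersen graph on `Fin 10`, as a finset of unordered pairs. -/
def petersenEdges : Finset (Sym2 (Fin 10)) :=
  {s(0,1), s(1,2), s(2,3), s(3,4), s(0,4), s(0,5), s(1,6), s(2,7),
   s(3,8), s(4,9), s(5,7), s(7,9), s(6,9), s(6,8), s(5,8)}

/-- The fixed orientation `D` of the Petersen edges. -/
def dirD : Finset (Fin 10 × Fin 10) :=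
  {(0,1), (0,4), (0,5), (1,2), (1,6), (2,3), (2,7), (3,4),
   (3,8), (4,9), (5,7), (5,8), (6,8), (6,9), (7,9)}

lemma petersen_irrefl : ∀ x : Fin 10, s(x,x) ∉ petersenEdges := by decide

lemma dirD_irrefl : ∀ x : Fin 10, (x,x) ∉ dirD := by decide

/-- The graph `G n`: `n` copies of the Petersen graph, cross-wired by the `n`-cycle
according to the orientation `dirD`. -/
def G (n : ℕ) : SimpleGraph (ZMod n × Fin 10) where
  Adj p q :=
    (p.1 = q.1 ∧ s(p.2, q.2) ∈ petersenEdges) ∨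
    (q.1 = p.1 + 1 ∧ (p.2, q.2) ∈ dirD) ∨
    (p.1 = q.1 + 1 ∧ (q.2, p.2) ∈ dirD)
  symm := by
    constructor
    rintro ⟨i, x⟩ ⟨j, y⟩ (⟨h1, h2⟩ | ⟨h1, h2⟩ | ⟨h1, h2⟩)
    · exact Or.inl ⟨h1.symm, by rwa [Sym2.eq_swap]⟩
    · exact Or.inr (Or.inr ⟨h1, h2⟩)
    · exact Or.inr (Or.inl ⟨h1, h2⟩)
  loopless := by
    constructor
    rintro ⟨i, x⟩ (⟨_, h2⟩ | ⟨_, h2⟩ | ⟨_, h2⟩)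
    · exact petersen_irrefl x h2
    · exact dirD_irrefl x h2
    · exact dirD_irrefl x h2
/-- For every `n ≥ 3`, the graph `G n` is triangle-free: it contains no 3-clique. -/
theorem Gn_triangle_free (n : ℕ) (hn : 3 ≤ n) : (G n).CliqueFree 3 := by
  have hD : ∀ x y : Fin 10, (x, y) ∈ dirD → s(x, y) ∈ petersenEdges := by decide
  have key : ∀ x y z : Fin 10, s(x, y) ∈ petersenEdges → s(x, z) ∈ petersenEdges →
      s(y, z) ∈ petersenEdges → False := by decide
  intro t ht
  obtain ⟨⟨i, x⟩, ⟨j, y⟩, ⟨k, z⟩, hab, hac, hbc, -⟩ := SimpleGraph.is3Clique_iff.mp ht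
  have g1 : s(x, y) ∈ petersenEdges := by
    rcases hab with ⟨_, h⟩ | ⟨_, h⟩ | ⟨_, h⟩
    · exact h
    · exact hD _ _ h
    · rw [Sym2.eq_swap]; exact hD _ _ h
  have g2 : s(x, z) ∈ petersenEdges := by
    rcases hac with ⟨_, h⟩ | ⟨_, h⟩ | ⟨_, h⟩
    · exact h
    · exact hD _ _ h
    · rw [Sym2.eq_swap]; exact hD _ _ h
  have g3 : s(y, z) ∈ petersenEdges := by
    rcases hbc with ⟨_, h⟩ | ⟨_, h⟩ | ⟨_, h⟩
    · exact h
    · exact hD _ _ h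
    · rw [Sym2.eq_swap]; exact hD _ _ h
  exact key x y z g1 g2 g3
end

section
/- The graph G_5 is not Ramanujan: there exists a real eigenvalue λ of the adjacency matrix of G_5 with |λ| ≠ 6 and |λ| > 2√5. -/
open SimpleGraph

open scoped Classical in
/-- The adjacency matrix of `G n` over `ℝ`. -/
noncomputable def adjMat (n : ℕ) : Matrix (ZMod n × Fin 10) (ZMod n × Fin 10) ℝ :=
  fun u v => if (G n).Adj u v then (1 : ℝ) else 0

/-! ### Auxiliary material for the proof -/

open Matrix

set_option maxRecDepth 100000

instance decAdjG5 : DecidableRel (G 5).Adj := fun p q => decidable_of_iff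
  ((p.1 = q.1 ∧ s(p.2, q.2) ∈ petersenEdges) ∨ (q.1 = p.1 + 1 ∧ (p.2, q.2) ∈ dirD) ∨
    (p.1 = q.1 + 1 ∧ (q.2, p.2) ∈ dirD)) Iff.rfl

/-- An integer copy of the adjacency matrix of `G 5`, with a decidable condition. -/
def adjZ : Matrix (ZMod 5 × Fin 10) (ZMod 5 × Fin 10) ℤ := fun p q =>
  if (G 5).Adj p q then 1 else 0

def tbl0 : Matrix (Fin 5) (Fin 10) ℤ :=
!![2, 3, 4, 4, 4, 4, 4, 4, 4, 3;
  -2, -1, 0, 1, 1, 0, 1, 2, 3, 4;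
  -4, -4, -4, -3, -3, -4, -3, -3, -2, -1;
  0, -1, -2, -3, -3, -2, -3, -4, -4, -4;
  4, 3, 3, 2, 1, 2, 1, 0, -1, -2]

def tbl1 : Matrix (Fin 5) (Fin 10) ℤ :=
!![11, 15, 17, 19, 19, 19, 20, 20, 17, 14;
  -11, -6, -1, 3, 8, 0, 6, 11, 14, 16;
  -17, -18, -18, -16, -13, -19, -16, -13, -8, -5;
  0, -5, -10, -13, -16, -13, -16, -18, -18, -19;
  17, 16, 12, 9, 4, 11, 6, 2, -3, -8]

def tbl2 : Matrix (Fin 5) (Fin 10) ℤ :=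
!![55, 70, 84, 87, 86, 90, 92, 89, 84, 71;
  -48, -29, -6, 17, 33, 4, 26, 46, 67, 84;
  -84, -88, -84, -74, -65, -85, -74, -62, -42, -17;
  -3, -25, -43, -61, -73, -54, -71, -87, -93, -92;
  84, 72, 61, 39, 19, 53, 31, 6, -16, -38]

def tbl3 : Matrix (Fin 5) (Fin 10) ℤ :=
!![254, 335, 381, 415, 420, 425, 448, 443, 392, 323;
  -230, -131, -32, 71, 178, 16, 133, 239, 316, 372;
  -390, -404, -401, -363, -298, -416, -361, -280, -186, -96;
  -8, -109, -216, -290, -352, -277, -352, -396, -419, -432;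
  390, 349, 268, 191, 92, 244, 148, 50, -63, -175]

def tbl4 : Matrix (Fin 5) (Fin 10) ℤ :=
!![1243, 1574, 1852, 1955, 1945, 2034, 2087, 2013, 1871, 1601;
  -1055, -637, -129, 359, 786, 113, 610, 1066, 1508, 1861;
  -1856, -1950, -1864, -1688, -1440, -1901, -1668, -1361, -920, -389;
  -53, -550, -958, -1359, -1658, -1226, -1602, -1917, -2059, -2039;
  1865, 1627, 1339, 893, 431, 1204, 717, 167, -336, -810]

/-- View a `Fin 5 × Fin 10` table as a vector indexed by `ZMod 5 × Fin 10`. -/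
def vec (t : Matrix (Fin 5) (Fin 10) ℤ) : ZMod 5 × Fin 10 → ℤ := fun p => t p.1 p.2

lemma mulVec01 : adjZ *ᵥ _root_.vec tbl0 = _root_.vec tbl1 := by
  funext p; revert p; decide

lemma mulVec12 : adjZ *ᵥ _root_.vec tbl1 = _root_.vec tbl2 := by
  funext p; revert p; decide

lemma mulVec23 : adjZ *ᵥ _root_.vec tbl2 = _root_.vec tbl3 := by
  funext p; revert p; decide

lemma mulVec34 : adjZ *ᵥ _root_.vec tbl3 = _root_.vec tbl4 := by
  funext p; revert p; decide

lemma dot00 : _root_.vec tbl0 ⬝ᵥ _root_.vec tbl0 = 409 := by decide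
lemma dot02 : _root_.vec tbl0 ⬝ᵥ _root_.vec tbl2 = 9084 := by decide
lemma dot04 : _root_.vec tbl0 ⬝ᵥ _root_.vec tbl4 = 203116 := by decide

lemma adjMat_eq : adjMat 5 = adjZ.map (Int.cast : ℤ → ℝ) := by
  funext p q
  simp only [adjMat, adjZ, Matrix.map_apply]
  by_cases h : (G 5).Adj p q
  · rw [if_pos h, if_pos h]; norm_num
  · rw [if_neg h, if_neg h]; norm_num

lemma adjMat_herm : (adjMat 5).IsHermitian := by
  rw [Matrix.IsHermitian]
  funext p q
  simp only [Matrix.conjTranspose_apply, adjMat, star_trivial]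
  by_cases h : (G 5).Adj p q
  · rw [if_pos h, if_pos ((G 5).adj_symm h)]
  · rw [if_neg h, if_neg (fun h' => h ((G 5).adj_symm h'))]

/-- Casting an integer `mulVec` identity to the reals. -/
lemma cast_mulVec {I : Type*} [Fintype I] (B : Matrix I I ℤ) (w : I → ℤ) :
    (B.map (Int.cast : ℤ → ℝ)) *ᵥ (fun i => ((w i : ℤ) : ℝ))
      = fun i => (((B *ᵥ w) i : ℤ) : ℝ) := by
  funext i
  simp only [Matrix.mulVec, dotProduct, Matrix.map_apply]
  push_cast
  rfl

lemma cast_dot {I : Type*} [Fintype I] (v w : I → ℤ) :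
    (fun i => ((v i : ℤ) : ℝ)) ⬝ᵥ (fun i => ((w i : ℤ) : ℝ)) = ((v ⬝ᵥ w : ℤ) : ℝ) := by
  simp only [dotProduct]
  push_cast
  rfl

/-- `G 5` is not Ramanujan: it has a real eigenvalue `λ` with `|λ| ≠ 6` and
`|λ| > 2√5`. -/
theorem G5_not_ramanujan :
    ∃ lam : ℝ, lam ∈ spectrum ℝ (adjMat 5) ∧ |lam| ≠ 6 ∧ 2 * Real.sqrt 5 < |lam| := by
  by_contra hcon
  push_neg at hcon
  set A : Matrix (ZMod 5 × Fin 10) (ZMod 5 × Fin 10) ℝ := adjMat 5 with hAdef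
  have hA : A.IsHermitian := adjMat_herm
  -- the certificate matrix
  set M : Matrix (ZMod 5 × Fin 10) (ZMod 5 × Fin 10) ℝ :=
    A ^ 4 - (56 : ℝ) • A ^ 2 + (720 : ℝ) • 1 with hMdef
  -- every eigenvalue d of A satisfies d^4 - 56 d^2 + 720 ≥ 0 under the assumption
  have hqnn : ∀ i, 0 ≤ (hA.eigenvalues i) ^ 4 - 56 * (hA.eigenvalues i) ^ 2 + 720 := by
    intro i
    set d : ℝ := hA.eigenvalues i with hd
    have hmem : d ∈ spectrum ℝ A := hA.eigenvalues_mem_spectrum_real i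
    rcases eq_or_ne |d| 6 with h6 | h6
    · have : d ^ 2 = 36 := by
        have := sq_abs d
        nlinarith [this, h6]
      nlinarith [this]
    · have hle : |d| ≤ 2 * Real.sqrt 5 := hcon d hmem h6
      have h5 : Real.sqrt 5 ^ 2 = 5 := Real.sq_sqrt (by norm_num)
      have hsq : d ^ 2 ≤ 20 := by
        have h1 : d ^ 2 = |d| ^ 2 := (sq_abs d).symm
        nlinarith [abs_nonneg d, Real.sqrt_nonneg 5]
      nlinarith [hsq]
  -- spectral decomposition
  set B : Matrix (ZMod 5 × Fin 10) (ZMod 5 × Fin 10) ℝ := (hA.eigenvectorUnitary :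
      Matrix (ZMod 5 × Fin 10) (ZMod 5 × Fin 10) ℝ)
    with hBdef
  have hB1 : B * star B = 1 := (Matrix.mem_unitaryGroup_iff).mp hA.eigenvectorUnitary.2
  have hB2 : star B * B = 1 := (Matrix.mem_unitaryGroup_iff').mp hA.eigenvectorUnitary.2
  set Dg : Matrix (ZMod 5 × Fin 10) (ZMod 5 × Fin 10) ℝ := diagonal hA.eigenvalues with hDgdef
  have hspec : A = B * Dg * star B := by
    have := hA.spectral_theorem
    simpa [hBdef, hDgdef, Function.comp] using this
  have key : ∀ D1 D2 : Matrix (ZMod 5 × Fin 10) (ZMod 5 × Fin 10) ℝ,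
      (B * D1 * star B) * (B * D2 * star B) = B * (D1 * D2) * star B := by
    intro D1 D2
    calc (B * D1 * star B) * (B * D2 * star B)
        = B * D1 * ((star B * B) * (D2 * star B)) := by
          simp only [Matrix.mul_assoc]
      _ = B * (D1 * D2) * star B := by rw [hB2]; simp only [Matrix.mul_assoc, one_mul]
  have hA2 : A ^ 2 = B * (Dg * Dg) * star B := by
    rw [pow_two, hspec, key]
  have hA4 : A ^ 4 = B * (Dg * Dg * (Dg * Dg)) * star B := by
    have : A ^ 4 = A ^ 2 * A ^ 2 := by rw [← pow_add]
    rw [this, hA2, key]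
  have hOne : (1 : Matrix (ZMod 5 × Fin 10) (ZMod 5 × Fin 10) ℝ) = B * 1 * star B := by
    rw [Matrix.mul_one, hB1]
  have hM : M = B * (Dg * Dg * (Dg * Dg) - (56 : ℝ) • (Dg * Dg) + (720 : ℝ) • 1) * star B := by
    rw [hMdef, hA4, hA2]
    conv_lhs => rw [hOne]
    simp only [Matrix.mul_sub, Matrix.sub_mul, Matrix.mul_add, Matrix.add_mul,
      Matrix.mul_smul, Matrix.smul_mul]
  have hDiag : Dg * Dg * (Dg * Dg) - (56 : ℝ) • (Dg * Dg) + (720 : ℝ) • 1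
      = diagonal (fun i => (hA.eigenvalues i) ^ 4 - 56 * (hA.eigenvalues i) ^ 2 + 720) := by
    rw [hDgdef, Matrix.diagonal_mul_diagonal, Matrix.diagonal_mul_diagonal]
    ext i j
    by_cases h : i = j
    · subst h
      simp only [Matrix.add_apply, Matrix.sub_apply, Matrix.smul_apply, smul_eq_mul,
        Matrix.diagonal_apply_eq, Matrix.one_apply_eq]
      ring
    · simp [Matrix.diagonal_apply_ne _ h, Matrix.one_apply_ne h]
  have hpsd : M.PosSemidef := by
    have hdiagPSD : (diagonal (fun i => (hA.eigenvalues i) ^ 4 - 56 * (hA.eigenvalues i) ^ 2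
        + 720)).PosSemidef := Matrix.posSemidef_diagonal_iff.mpr hqnn
    have hconj := hdiagPSD.mul_mul_conjTranspose_same B
    rw [hM, hDiag]
    simpa [Matrix.star_eq_conjTranspose] using hconj
  -- the certificate vector
  set x : ZMod 5 × Fin 10 → ℝ := fun p => ((_root_.vec tbl0 p : ℤ) : ℝ) with hxdef
  have hnn : 0 ≤ star x ⬝ᵥ (M *ᵥ x) := hpsd.dotProduct_mulVec_nonneg x
  have hAx : A *ᵥ x = fun p => ((_root_.vec tbl1 p : ℤ) : ℝ) := by
    rw [hAdef, adjMat_eq, hxdef, cast_mulVec, mulVec01]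
  have hA2x : A ^ 2 *ᵥ x = fun p => ((_root_.vec tbl2 p : ℤ) : ℝ) := by
    rw [pow_two, ← Matrix.mulVec_mulVec, hAx, hAdef, adjMat_eq, cast_mulVec, mulVec12]
  have hA3x : A ^ 3 *ᵥ x = fun p => ((_root_.vec tbl3 p : ℤ) : ℝ) := by
    have : A ^ 3 = A * A ^ 2 := pow_succ' A 2
    rw [this, ← Matrix.mulVec_mulVec, hA2x, hAdef, adjMat_eq, cast_mulVec, mulVec23]
  have hA4x : A ^ 4 *ᵥ x = fun p => ((_root_.vec tbl4 p : ℤ) : ℝ) := by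
    have : A ^ 4 = A * A ^ 3 := pow_succ' A 3
    rw [this, ← Matrix.mulVec_mulVec, hA3x, hAdef, adjMat_eq, cast_mulVec, mulVec34]
  have hMx : star x ⬝ᵥ (M *ᵥ x) = -11108 := by
    have hstar : star x = x := star_trivial x
    rw [hstar, hMdef, Matrix.add_mulVec, Matrix.sub_mulVec, Matrix.smul_mulVec,
      Matrix.smul_mulVec, Matrix.one_mulVec, hA4x, hA2x]
    rw [dotProduct_add, dotProduct_sub, dotProduct_smul,
      dotProduct_smul]
    rw [hxdef]
    rw [cast_dot, cast_dot, cast_dot, dot00, dot02, dot04]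
    norm_num
  rw [hMx] at hnn
  norm_num at hnn
end

section
/- For every n ∈ {3, 4, 5, 6, 7}, the graph G_n is not edge-transitive: it is not the case that for every pair of edges e₁, e₂ of G_n there exists a graph automorphism φ : G_n ≃g G_n whose induced map on unordered pairs sends e₁ to e₂. -/
open SimpleGraph

instance (n : ℕ) : DecidableRel (G n).Adj := fun p q =>
  inferInstanceAs (Decidable ((p.1 = q.1 ∧ s(p.2, q.2) ∈ petersenEdges) ∨
    (q.1 = p.1 + 1 ∧ (p.2, q.2) ∈ dirD) ∨
    (p.1 = q.1 + 1 ∧ (q.2, p.2) ∈ dirD)))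

/-- The neighborhood of a vertex, as a finset. -/
def nbr (n : ℕ) [NeZero n] (u : ZMod n × Fin 10) : Finset (ZMod n × Fin 10) :=
  Finset.univ.filter (fun w => (G n).Adj u w)

/-- Number of walks of length 4 from `u` to `v`: an automorphism invariant. -/
def tInv (n : ℕ) [NeZero n] (u v : ZMod n × Fin 10) : ℕ :=
  ∑ w ∈ nbr n u, ∑ z ∈ nbr n v, (nbr n w ∩ nbr n z).card

lemma nbr_map (n : ℕ) [NeZero n] (φ : (G n) ≃g (G n)) (u : ZMod n × Fin 10) :
    nbr n (φ u) = (nbr n u).image φ := by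
  ext w
  simp only [nbr, Finset.mem_image, Finset.mem_filter, Finset.mem_univ, true_and]
  constructor
  · intro h
    refine ⟨φ.symm w, ?_, φ.apply_symm_apply w⟩
    have := φ.map_adj_iff (v := u) (w := φ.symm w)
    rw [φ.apply_symm_apply] at this
    exact this.mp h
  · rintro ⟨z, hz, rfl⟩
    exact φ.map_adj_iff.mpr hz

lemma tInv_map (n : ℕ) [NeZero n] (φ : (G n) ≃g (G n)) (u v : ZMod n × Fin 10) :
    tInv n (φ u) (φ v) = tInv n u v := by
  have hinj : Function.Injective (φ : ZMod n × Fin 10 → ZMod n × Fin 10) :=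
    φ.toEquiv.injective
  unfold tInv
  rw [nbr_map n φ u, nbr_map n φ v, Finset.sum_image (fun a _ b _ h => hinj h)]
  refine Finset.sum_congr rfl fun w _ => ?_
  rw [Finset.sum_image (fun a _ b _ h => hinj h)]
  refine Finset.sum_congr rfl fun z _ => ?_
  rw [nbr_map n φ w, nbr_map n φ z, ← Finset.image_inter _ _ hinj,
    Finset.card_image_of_injective _ hinj]

lemma key (n : ℕ) [NeZero n] (a b : ℕ) (hab : a ≠ b)
    (h1 : tInv n (0,0) (0,1) = a)
    (h2 : tInv n (0,0) (0,4) = b)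
    (h3 : tInv n (0,4) (0,0) = b)
    (e1 : (G n).Adj (0,0) (0,1))
    (e2 : (G n).Adj (0,0) (0,4)) :
    ¬ ∀ e₁ ∈ (G n).edgeSet, ∀ e₂ ∈ (G n).edgeSet,
        ∃ φ : (G n) ≃g (G n), Sym2.map φ e₁ = e₂ := by
  intro h
  obtain ⟨φ, hφ⟩ := h s((0,0),(0,1)) e1 s((0,0),(0,4)) e2
  rw [Sym2.map_pair_eq, Sym2.eq_iff] at hφ
  have hmap := tInv_map n φ (0,0) (0,1)
  rcases hφ with ⟨ha, hb⟩ | ⟨ha, hb⟩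
  · rw [ha, hb, h1, h2] at hmap
    exact hab hmap.symm
  · rw [ha, hb, h1, h3] at hmap
    exact hab hmap.symm

set_option maxHeartbeats 4000000 in
/-- For every `n ∈ {3, 4, 5, 6, 7}`, the graph `G n` is not edge-transitive: it is not the
case that every edge can be mapped to every other edge by a graph automorphism. -/
theorem Gn_not_edge_transitive :
    ∀ n ∈ ({3, 4, 5, 6, 7} : Set ℕ),
      ¬ ∀ e₁ ∈ (G n).edgeSet, ∀ e₂ ∈ (G n).edgeSet,
          ∃ φ : (G n) ≃g (G n), Sym2.map φ e₁ = e₂ := by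
  intro n hn
  simp only [Set.mem_insert_iff, Set.mem_singleton_iff] at hn
  rcases hn with rfl | rfl | rfl | rfl | rfl
  · exact key 3 23 20 (by decide) (by decide) (by decide) (by decide) (by decide) (by decide)
  · exact key 4 22 14 (by decide) (by decide) (by decide) (by decide) (by decide) (by decide)
  · exact key 5 22 13 (by decide) (by decide) (by decide) (by decide) (by decide) (by decide)
  · exact key 6 22 13 (by decide) (by decide) (by decide) (by decide) (by decide) (by decide)
  · exact key 7 22 13 (by decide) (by decide) (by decide) (by decide) (by decide) (by decide)
end
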